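/- arXiv:1701.03732 — 7 statements merged into one kernel-verified Lean document; each statement's English description precedes it below -/
import Mathlib

section
/- Let B be a finite set of bidders partitioned into a set B_r of relay nodes and a set B_u of user equipments, let N be a positive integer (the number of resource blocks), let each bidder i have an integer demand r_i ≥ 1, and let x : B → {0,1} be a winner indicator. Then there exists an allocation matrix a : (B ∪ {res}) × {1,…,N} → {0,1} (where the extra row 'res' represents resource blocks reserved for intra-relay communication) satisfying (i) Σ_k a(i,k) = r_i·x_i for every i ∈ B, (ii) Σ_{j ∈ B ∪ {res}} a(j,k) ≤ 1 for every k, and (iii) Σ_k a(i,k) ≤ Σ_k a(res,k) for every i ∈ B_r, if and only if Σ_{i∈B} r_i·x_i + max_{i∈B_r} r_i·x_i ≤ N (where the maximum over the empty set is 0). -/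
/-- Interval-packing construction: if the row demands sum to at most `N`, there is
a 0/1 matrix with prescribed row sums and column sums at most 1. -/
lemma pack {α : Type*} [Fintype α] [DecidableEq α] (v : α → ℕ) (N : ℕ)
    (h : ∑ j, v j ≤ N) :
    ∃ a : α → Fin N → ℕ,
      (∀ j k, a j k ≤ 1) ∧ (∀ j, ∑ k, a j k = v j) ∧ (∀ k, ∑ j, a j k ≤ 1) := by
  classical
  let e := Fintype.equivFin α
  set S : α → ℕ := fun j => ∑ j' ∈ Finset.univ.filter (fun j' => e j' < e j), v j' with hS
  have hle : ∀ j, S j + v j ≤ N := by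
    intro j
    have hsub : insert j (Finset.univ.filter (fun j' => e j' < e j)) ⊆ Finset.univ :=
      Finset.subset_univ _
    have hnot : j ∉ Finset.univ.filter (fun j' => e j' < e j) := by simp
    have := Finset.sum_le_sum_of_subset (f := v) hsub
    rw [Finset.sum_insert hnot] at this
    simp only [hS]
    omega
  have hmono : ∀ j j', e j < e j' → S j + v j ≤ S j' := by
    intro j j' hjj
    have hnot : j ∉ Finset.univ.filter (fun j'' => e j'' < e j) := by simp
    have hsub : insert j (Finset.univ.filter (fun j'' => e j'' < e j)) ⊆
        Finset.univ.filter (fun j'' => e j'' < e j') := by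
      intro y hy
      simp only [Finset.mem_insert, Finset.mem_filter, Finset.mem_univ, true_and] at hy ⊢
      rcases hy with rfl | hy
      · exact hjj
      · exact hy.trans hjj
    have := Finset.sum_le_sum_of_subset (f := v) hsub
    rw [Finset.sum_insert hnot] at this
    simp only [hS]
    omega
  refine ⟨fun j k => if S j ≤ (k : ℕ) ∧ (k : ℕ) < S j + v j then 1 else 0, ?_, ?_, ?_⟩
  · intro j k; dsimp only; split <;> simp
  · intro j
    dsimp only
    rw [Fin.sum_univ_eq_sum_range (fun k => if S j ≤ k ∧ k < S j + v j then 1 else 0) N]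
    rw [← Finset.card_filter]
    have : (Finset.range N).filter (fun k => S j ≤ k ∧ k < S j + v j)
        = Finset.Ico (S j) (S j + v j) := by
      ext k
      simp only [Finset.mem_filter, Finset.mem_range, Finset.mem_Ico]
      have := hle j
      omega
    rw [this]
    simp [Nat.card_Ico]
  · intro k
    dsimp only
    rw [← Finset.card_filter]
    rw [Finset.card_le_one]
    intro j hj j' hj'
    simp only [Finset.mem_filter, Finset.mem_univ, true_and] at hj hj'
    by_contra hne
    have hee : e j ≠ e j' := fun h' => hne (e.injective h')
    rcases lt_or_gt_of_ne hee with h' | h'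
    · have := hmono j j' h'; omega
    · have := hmono j' j h'; omega

/-- In the relaying base station model with `N` homogeneous resource
blocks, a 0/1 allocation matrix (with an extra reserved row `none` for intra-relay
communication) compatible with the winner indicator `x` exists iff
`∑ r_i x_i + max_{i ∈ B_r} r_i x_i ≤ N`. -/
theorem stmt0 {ι : Type*} [Fintype ι] [DecidableEq ι]
    (Br Bu : Finset ι) (hpart : Br ∪ Bu = Finset.univ) (hdisj : Disjoint Br Bu)
    (N : ℕ) (hN : 0 < N)
    (r : ι → ℕ) (hr : ∀ i, 1 ≤ r i)
    (x : ι → ℕ) (hx : ∀ i, x i ≤ 1) :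
    (∃ a : Option ι → Fin N → ℕ,
      (∀ j k, a j k ≤ 1) ∧
      (∀ i, ∑ k, a (some i) k = r i * x i) ∧
      (∀ k, ∑ j, a j k ≤ 1) ∧
      (∀ i ∈ Br, ∑ k, a (some i) k ≤ ∑ k, a none k)) ↔
    (∑ i, r i * x i) + Br.sup (fun i => r i * x i) ≤ N := by
  constructor
  · rintro ⟨a, h01, hrow, hcol, hrelay⟩
    have hsup : Br.sup (fun i => r i * x i) ≤ ∑ k, a none k :=
      Finset.sup_le fun i hi => (hrow i) ▸ hrelay i hi
    have hsum : ∑ i, r i * x i = ∑ i, ∑ k, a (some i) k := by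
      simp [hrow]
    have htot : (∑ j : Option ι, ∑ k, a j k) ≤ N := by
      rw [Finset.sum_comm]
      calc (∑ k : Fin N, ∑ j, a j k) ≤ ∑ k : Fin N, 1 := Finset.sum_le_sum fun k _ => hcol k
        _ = N := by simp
    rw [Fintype.sum_option] at htot
    omega
  · intro h
    set v : Option ι → ℕ := fun j => j.elim (Br.sup (fun i => r i * x i)) (fun i => r i * x i)
      with hv
    have hsum : ∑ j : Option ι, v j ≤ N := by
      rw [Fintype.sum_option]
      simp only [hv, Option.elim]
      omega
    obtain ⟨a, h01, hrow, hcol⟩ := pack v N hsum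
    exact ⟨a, h01, fun i => hrow (some i), hcol,
      fun i hi => by
        rw [hrow (some i), hrow none]
        simp only [hv, Option.elim]
        exact Finset.le_sup (f := fun i => r i * x i) hi⟩
end

section
/- Let B be a finite set of bidders partitioned into a nonempty set B_r of relay nodes and a set B_u, with values v_i ≥ 0 and integer demands r_i ≥ 1. Let λ > 0, let C ⊆ B, let μ ∈ B \ C satisfy v_μ/r_μ = max_{i ∈ B \ C} v_i/r_i, and let g = v_μ/(λ·r_μ). Define ξ_i = v_i for i ∈ C and ξ_i = 0 for i ∉ C, and let ρ_i be any reals with 0 ≤ ρ_i ≤ λ/|B_r| for i ∈ B_r. Then the scaled solution (λ' , ρ'_i, ξ_i) with λ' = g·λ and ρ'_i = g·ρ_i is dual feasible: r_i·λ' + ρ'_i·[i ∈ B_r] + ξ_i ≥ v_i for every i ∈ B, and λ' ≥ Σ_{i∈B_r} ρ'_i. -/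
/-- Dual fitting — scaling the dual variables `λ` and `ρ` by
`g = v_μ/(λ r_μ)`, where `μ` maximizes value-per-block among unselected bidders,
yields a feasible dual solution. -/
theorem stmt2 {ι : Type*} [Fintype ι] [DecidableEq ι]
    (Br Bu : Finset ι) (hpart : Br ∪ Bu = Finset.univ) (hdisj : Disjoint Br Bu)
    (hBr : Br.Nonempty)
    (v : ι → ℝ) (hv : ∀ i, 0 ≤ v i)
    (r : ι → ℕ) (hr : ∀ i, 1 ≤ r i)
    (lam : ℝ) (hlam : 0 < lam)
    (C : Finset ι) (μ : ι) (hμ : μ ∉ C)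
    (hmax : ∀ i ∉ C, v i / (r i : ℝ) ≤ v μ / (r μ : ℝ))
    (g : ℝ) (hg : g = v μ / (lam * (r μ : ℝ)))
    (ρ : ι → ℝ) (hρ : ∀ i ∈ Br, 0 ≤ ρ i ∧ ρ i ≤ lam / (Br.card : ℝ))
    (ξ : ι → ℝ) (hξ : ∀ i, ξ i = if i ∈ C then v i else 0) :
    (∀ i, (r i : ℝ) * (g * lam) + (if i ∈ Br then g * ρ i else 0) + ξ i ≥ v i) ∧
    g * lam ≥ ∑ i ∈ Br, g * ρ i := by
  have hrpos : ∀ i, (0:ℝ) < (r i : ℝ) := fun i => by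
    exact_mod_cast Nat.lt_of_lt_of_le Nat.zero_lt_one (hr i)
  have hg0 : 0 ≤ g := by
    rw [hg]
    exact div_nonneg (hv μ) (le_of_lt (mul_pos hlam (hrpos μ)))
  have hgl : g * lam = v μ / (r μ : ℝ) := by
    rw [hg, div_mul_eq_mul_div]
    rw [show v μ * lam = lam * v μ from mul_comm _ _]
    rw [mul_div_mul_left _ _ hlam.ne']
  constructor
  · intro i
    have hρi : 0 ≤ (if i ∈ Br then g * ρ i else 0) := by
      split
      · next h => exact mul_nonneg hg0 (hρ i h).1
      · exact le_refl 0
    by_cases hiC : i ∈ C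
    · have hξi : ξ i = v i := by rw [hξ i]; simp [hiC]
      have hrl : 0 ≤ (r i : ℝ) * (g * lam) :=
        mul_nonneg (le_of_lt (hrpos i)) (mul_nonneg hg0 (le_of_lt hlam))
      rw [hξi]
      linarith
    · have h1 : v i / (r i : ℝ) ≤ v μ / (r μ : ℝ) := hmax i hiC
      have h2 : v i ≤ (r i : ℝ) * (g * lam) := by
        rw [hgl]
        have := mul_le_mul_of_nonneg_right h1 (le_of_lt (hrpos i))
        rwa [div_mul_cancel₀ _ (hrpos i).ne', mul_comm] at this
      have hξi : 0 ≤ ξ i := by rw [hξ i]; simp [hiC]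
      linarith
  · have h1 : ∑ i ∈ Br, g * ρ i ≤ ∑ i ∈ Br, g * (lam / (Br.card : ℝ)) := by
      apply Finset.sum_le_sum
      intro i hi
      exact mul_le_mul_of_nonneg_left (hρ i hi).2 hg0
    have hc : (Br.card : ℝ) ≠ 0 := by
      exact_mod_cast Finset.card_ne_zero_of_mem hBr.choose_spec
    have h2 : ∑ i ∈ Br, g * (lam / (Br.card : ℝ)) = g * lam := by
      rw [Finset.sum_const, nsmul_eq_mul]
      field_simp
    rw [ge_iff_le, ← h2]
    exact h1
end

section
/- Let N and m be reals with N > 2m > 0, let δ = N/m, let λ > 0, and let r be a real with 0 < r ≤ m. Then N·λ·exp((δ−2)·r/(N−2m)) ≤ N·λ + λ·r·δ·(e−1), where e = exp(1). -/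
/-- The per-iteration bound on the growth of `N·λ` in the greedy
primal-dual algorithm (inequality (8) of the paper). -/
theorem stmt3 (N m : ℝ) (hm : 0 < 2 * m) (hN : 2 * m < N)
    (δ : ℝ) (hδ : δ = N / m) (lam : ℝ) (hlam : 0 < lam)
    (r : ℝ) (hr0 : 0 < r) (hrm : r ≤ m) :
    N * lam * Real.exp ((δ - 2) * r / (N - 2 * m)) ≤
      N * lam + lam * r * δ * (Real.exp 1 - 1) := by
  have hm0 : 0 < m := by linarith
  have hNm : (0:ℝ) < N - 2 * m := by linarith
  set x : ℝ := r / m with hx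
  have hx0 : 0 < x := div_pos hr0 hm0
  have hx1 : x ≤ 1 := by
    rw [hx, div_le_one hm0]; exact hrm
  have harg : (δ - 2) * r / (N - 2 * m) = x := by
    rw [hδ, hx]
    field_simp
    have h2 : N - m * 2 ≠ 0 := (by linarith : (0:ℝ) < N - m * 2).ne'
    exact div_self h2
  have key : Real.exp x ≤ 1 + x * (Real.exp 1 - 1) := by
    have h := convexOn_exp.2 (Set.mem_univ (0:ℝ)) (Set.mem_univ (1:ℝ))
      (by linarith : (0:ℝ) ≤ 1 - x) (le_of_lt hx0) (by ring)
    simp only [smul_eq_mul, mul_zero, mul_one, zero_add, Real.exp_zero] at h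
    calc Real.exp x = Real.exp ((1 - x) * 0 + x * 1) := by ring_nf
      _ ≤ (1 - x) * 1 + x * Real.exp 1 := by simpa using h
      _ = 1 + x * (Real.exp 1 - 1) := by ring
  have hrd : r * δ = N * x := by
    rw [hδ, hx]; field_simp
  rw [harg]
  have hNl : 0 < N * lam := mul_pos (by linarith) hlam
  calc N * lam * Real.exp x ≤ N * lam * (1 + x * (Real.exp 1 - 1)) := by
        exact mul_le_mul_of_nonneg_left key (le_of_lt hNl)
    _ = N * lam + lam * (N * x) * (Real.exp 1 - 1) := by ring
    _ = N * lam + lam * r * δ * (Real.exp 1 - 1) := by rw [← hrd]; ring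
end

section
/- Let B be a finite set of bidders partitioned into B_r and B_u with integer demands r_i ≥ 1, let N be a positive integer, and let R : B × {1,…,N} → ℝ. Suppose β_i (i ∈ B), λ̃_k ≥ 0 (1 ≤ k ≤ N), ρ̃_i ≥ 0 (i ∈ B_r), ξ̃_i ≥ 0 (i ∈ B) satisfy λ̃_k ≥ β_i − ρ̃_i·[i ∈ B_r] + R(i,k) for all i, k, λ̃_k ≥ Σ_{i∈B_r} ρ̃_i for all k, and r_i·β_i + ξ̃_i ≥ 0 for all i. Then replacing each β_i by β'_i = −ξ̃_i/r_i yields a solution satisfying the same three families of constraints (with the same λ̃, ρ̃, ξ̃ and hence the same dual objective value Σ_k λ̃_k + Σ_i ξ̃_i). -/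
/-- In the dual of the extended HetNet winner determination
problem, replacing each `β_i` by `-ξ_i/r_i` preserves the three families of
dual constraints (and hence the dual objective value). -/
theorem stmt13 {ι : Type*} [Fintype ι] [DecidableEq ι]
    (Br Bu : Finset ι) (hpart : Br ∪ Bu = Finset.univ) (hdisj : Disjoint Br Bu)
    (r : ι → ℕ) (hr : ∀ i, 1 ≤ r i)
    (N : ℕ) (hN : 0 < N) (R : ι → Fin N → ℝ)
    (β : ι → ℝ)
    (lam : Fin N → ℝ) (hlam : ∀ k, 0 ≤ lam k)
    (ρ : ι → ℝ) (hρ : ∀ i ∈ Br, 0 ≤ ρ i)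
    (ξ : ι → ℝ) (hξ : ∀ i, 0 ≤ ξ i)
    (hc1 : ∀ i k, lam k ≥ β i - (if i ∈ Br then ρ i else 0) + R i k)
    (hc2 : ∀ k, lam k ≥ ∑ i ∈ Br, ρ i)
    (hc3 : ∀ i, (r i : ℝ) * β i + ξ i ≥ 0) :
    (∀ i k, lam k ≥ (-(ξ i) / (r i : ℝ)) - (if i ∈ Br then ρ i else 0) + R i k) ∧
    (∀ k, lam k ≥ ∑ i ∈ Br, ρ i) ∧
    (∀ i, (r i : ℝ) * (-(ξ i) / (r i : ℝ)) + ξ i ≥ 0) := by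
  have hrpos : ∀ i, (0:ℝ) < (r i : ℝ) := fun i => by
    exact_mod_cast Nat.lt_of_lt_of_le Nat.zero_lt_one (hr i)
  have hle : ∀ i, (-(ξ i) / (r i : ℝ)) ≤ β i := by
    intro i
    rw [div_le_iff₀ (hrpos i)]
    nlinarith [hc3 i]
  refine ⟨fun i k => le_trans (by linarith [hle i]) (hc1 i k), hc2, fun i => ?_⟩
  have : (r i : ℝ) ≠ 0 := ne_of_gt (hrpos i)
  field_simp
  ring_nf
  exact le_refl _
end

section
/- Let B be a finite set of bidders partitioned into B_r and B_u with integer demands r_i ≥ 1, let N be a positive integer, and let R : B × {1,…,N} → ℝ. Suppose a : (B ∪ {res}) × {1,…,N} → [0,1] and x : B → [0,1] satisfy Σ_k a(i,k) = r_i·x_i for all i ∈ B, Σ_{j∈B} a(j,k) + a(res,k) ≤ 1 for all k, and Σ_k a(i,k) ≤ Σ_k a(res,k) for all i ∈ B_r. Suppose λ̃_k ≥ 0, ρ̃_i ≥ 0 (i ∈ B_r), ξ̃_i ≥ 0 (i ∈ B) satisfy λ̃_k + ξ̃_i/r_i + ρ̃_i·[i ∈ B_r] ≥ R(i,k) for all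 i ∈ B and all k, and λ̃_k ≥ Σ_{i∈B_r} ρ̃_i for all k. Then Σ_{i∈B} Σ_k R(i,k)·a(i,k) ≤ Σ_k λ̃_k + Σ_{i∈B} ξ̃_i. -/
/-- Weak duality for the extended HetNet model with heterogeneous
resource blocks: any feasible fractional allocation has value at most the
simplified dual objective. -/
theorem stmt14 {ι : Type*} [Fintype ι] [DecidableEq ι]
    (Br Bu : Finset ι) (hpart : Br ∪ Bu = Finset.univ) (hdisj : Disjoint Br Bu)
    (r : ι → ℕ) (hr : ∀ i, 1 ≤ r i)
    (N : ℕ) (hN : 0 < N) (R : ι → Fin N → ℝ)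
    (a : Option ι → Fin N → ℝ) (ha0 : ∀ j k, 0 ≤ a j k) (ha1 : ∀ j k, a j k ≤ 1)
    (x : ι → ℝ) (hx0 : ∀ i, 0 ≤ x i) (hx1 : ∀ i, x i ≤ 1)
    (hp1 : ∀ i, ∑ k, a (some i) k = (r i : ℝ) * x i)
    (hp2 : ∀ k, (∑ j, a (some j) k) + a none k ≤ 1)
    (hp3 : ∀ i ∈ Br, ∑ k, a (some i) k ≤ ∑ k, a none k)
    (lam : Fin N → ℝ) (hlam : ∀ k, 0 ≤ lam k)
    (ρ : ι → ℝ) (hρ : ∀ i ∈ Br, 0 ≤ ρ i)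
    (ξ : ι → ℝ) (hξ : ∀ i, 0 ≤ ξ i)
    (hd1 : ∀ i k, lam k + ξ i / (r i : ℝ) + (if i ∈ Br then ρ i else 0) ≥ R i k)
    (hd2 : ∀ k, lam k ≥ ∑ i ∈ Br, ρ i) :
    ∑ i, ∑ k, R i k * a (some i) k ≤ (∑ k, lam k) + ∑ i, ξ i := by
  have hrpos : ∀ i, (0:ℝ) < (r i : ℝ) := fun i => by exact_mod_cast hr i
  have step1 : ∑ i, ∑ k, R i k * a (some i) k ≤
      ∑ i, ∑ k, (lam k + ξ i / (r i : ℝ) + (if i ∈ Br then ρ i else 0)) * a (some i) k := by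
    refine Finset.sum_le_sum fun i _ => Finset.sum_le_sum fun k _ => ?_
    exact mul_le_mul_of_nonneg_right (hd1 i k) (ha0 _ _)
  have split : ∑ i, ∑ k, (lam k + ξ i / (r i : ℝ) + (if i ∈ Br then ρ i else 0)) * a (some i) k =
      (∑ i, ∑ k, lam k * a (some i) k) + (∑ i, (ξ i / (r i : ℝ)) * ∑ k, a (some i) k)
      + (∑ i ∈ Br, ρ i * ∑ k, a (some i) k) := by
    have h1 : ∀ i : ι, ∑ k, (lam k + ξ i / (r i : ℝ) + (if i ∈ Br then ρ i else 0)) * a (some i) k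
        = (∑ k, lam k * a (some i) k) + (ξ i / (r i : ℝ)) * ∑ k, a (some i) k
          + (if i ∈ Br then ρ i * ∑ k, a (some i) k else 0) := by
      intro i
      rw [Finset.mul_sum]
      split
      · rw [Finset.mul_sum, ← Finset.sum_add_distrib, ← Finset.sum_add_distrib]
        apply Finset.sum_congr rfl; intro k _; ring
      · simp only [add_zero, ← Finset.sum_add_distrib]
        apply Finset.sum_congr rfl; intro k _; ring
    simp only [h1, Finset.sum_add_distrib]
    congr 1
    rw [Finset.sum_ite_mem, Finset.univ_inter]
  -- Bound piece 2: ∑ i, (ξ i / r i) * ∑ k a = ∑ ξ i * x i ≤ ∑ ξ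
  have b2 : ∑ i, (ξ i / (r i : ℝ)) * ∑ k, a (some i) k ≤ ∑ i, ξ i := by
    refine Finset.sum_le_sum fun i _ => ?_
    rw [hp1 i]
    have hne : ((r i : ℝ)) ≠ 0 := (hrpos i).ne'
    have h : ξ i / (r i : ℝ) * ((r i : ℝ) * x i) = ξ i * x i := by
      field_simp
    rw [h]
    nlinarith [hξ i, hx0 i, hx1 i]
  -- Bound piece 3: ∑_{i∈Br} ρ i * ∑_k a(i,k) ≤ ∑_k lam k * a none k
  have b3 : ∑ i ∈ Br, ρ i * ∑ k, a (some i) k ≤ ∑ k, lam k * a none k := by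
    have s1 : ∑ i ∈ Br, ρ i * ∑ k, a (some i) k ≤ ∑ i ∈ Br, ρ i * ∑ k, a none k :=
      Finset.sum_le_sum fun i hi => mul_le_mul_of_nonneg_left (hp3 i hi) (hρ i hi)
    have s2 : ∑ i ∈ Br, ρ i * ∑ k, a none k = ∑ k, (∑ i ∈ Br, ρ i) * a none k := by
      rw [← Finset.sum_mul, Finset.mul_sum]
    have s3 : ∑ k, (∑ i ∈ Br, ρ i) * a none k ≤ ∑ k, lam k * a none k :=
      Finset.sum_le_sum fun k _ => mul_le_mul_of_nonneg_right (hd2 k) (ha0 _ _)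
    linarith
  -- Bound pieces 1+3: ∑_{i,k} lam k * a(i,k) + ∑_k lam k * a none k ≤ ∑ lam
  have b1 : (∑ i, ∑ k, lam k * a (some i) k) + ∑ k, lam k * a none k ≤ ∑ k, lam k := by
    rw [Finset.sum_comm, ← Finset.sum_add_distrib]
    refine Finset.sum_le_sum fun k _ => ?_
    have := hp2 k
    have hl := hlam k
    calc (∑ i, lam k * a (some i) k) + lam k * a none k
        = lam k * ((∑ i, a (some i) k) + a none k) := by rw [mul_add, Finset.mul_sum]
      _ ≤ lam k * 1 := mul_le_mul_of_nonneg_left (hp2 k) hl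
      _ = lam k := mul_one _
  linarith [step1, split.le, split.ge]
end

section
/- Let bidders 1, …, n, partitioned into relay nodes B_r and user equipments B_u, have values v_i > 0 and integer demands r_i ≥ 1, indexed so that v_1/r_1 ≥ v_2/r_2 ≥ … ≥ v_n/r_n. Let m = max_i r_i, let N be an integer with N > 2m, and let δ = N/m. Define λ_0 = 1/N and λ_t = λ_{t−1}·exp((δ−2)·r_t/(N−2m)) for t ≥ 1, and let T be the largest index such that N·λ_{t−1} ≤ exp(δ−2) for all 1 ≤ t ≤ T (the greedy algorithm accepts bids 1, …, T). Let p = Σ_{t=1}^{T} v_t, and let OPT be the maximum of Σ_i v_i·x_i over all x : {1,…,n} → {0,1} satisfying Σ_i r_i·x_i + max_{i∈B_r} r_i·x_i ≤ N. Then p ≥ ((δ−2)/(δ·e−2))·OPT, where e = exp(1). -/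
set_option maxHeartbeats 1000000 in
/-- Theorem 4 of the paper — the greedy primal-dual algorithm
(accepting bids 1,…,T in nonincreasing order of value-per-block while
`N·λ ≤ exp(δ-2)`) obtains social welfare at least `((δ-2)/(δe-2))·OPT`. -/
theorem stmt15 (n : ℕ) (hn : 1 ≤ n)
    (Br Bu : Finset ℕ) (hpart : Br ∪ Bu = Finset.Icc 1 n) (hdisj : Disjoint Br Bu)
    (v : ℕ → ℝ) (hv : ∀ i ∈ Finset.Icc 1 n, 0 < v i)
    (r : ℕ → ℕ) (hr : ∀ i ∈ Finset.Icc 1 n, 1 ≤ r i)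
    (hsort : ∀ i j : ℕ, 1 ≤ i → i ≤ j → j ≤ n → v j / (r j : ℝ) ≤ v i / (r i : ℝ))
    (m : ℕ) (hm : m = (Finset.Icc 1 n).sup r)
    (N : ℕ) (hN : 2 * m < N)
    (δ : ℝ) (hδ : δ = (N : ℝ) / (m : ℝ))
    (lam : ℕ → ℝ) (hlam0 : lam 0 = 1 / (N : ℝ))
    (hlamrec : ∀ t : ℕ, t < n →
      lam (t + 1) = lam t * Real.exp ((δ - 2) * (r (t + 1) : ℝ) / ((N : ℝ) - 2 * (m : ℝ))))
    (T : ℕ) (hTn : T ≤ n)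
    (hTle : ∀ t : ℕ, 1 ≤ t → t ≤ T → (N : ℝ) * lam (t - 1) ≤ Real.exp (δ - 2))
    (hTmax : T < n → Real.exp (δ - 2) < (N : ℝ) * lam T)
    (p : ℝ) (hp : p = ∑ t ∈ Finset.Icc 1 T, v t)
    (OPT : ℝ)
    (hOPT : IsGreatest {w : ℝ | ∃ x : ℕ → ℕ, (∀ i, x i ≤ 1) ∧
        ((∑ i ∈ Finset.Icc 1 n, r i * x i) + Br.sup (fun i => r i * x i) ≤ N) ∧
        w = ∑ i ∈ Finset.Icc 1 n, v i * (x i : ℝ)} OPT) :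
    p ≥ ((δ - 2) / (δ * Real.exp 1 - 2)) * OPT := by
  -- basic positivity facts
  have h1n : (1 : ℕ) ∈ Finset.Icc 1 n := by simp [hn]
  have hm1 : 1 ≤ m := le_trans (hr 1 h1n) (hm ▸ Finset.le_sup h1n)
  have hM0 : (0 : ℝ) < (m : ℝ) := by exact_mod_cast hm1
  have hNm : (2 : ℝ) * (m : ℝ) < (N : ℝ) := by exact_mod_cast hN
  have hNr0 : (0 : ℝ) < (N : ℝ) := by linarith
  have hNr2M : (0 : ℝ) < (N : ℝ) - 2 * (m : ℝ) := by linarith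
  have hδ2 : (0 : ℝ) < δ - 2 := by
    rw [hδ]
    rw [sub_pos, lt_div_iff₀ hM0]
    linarith
  have he2 : (2 : ℝ) ≤ Real.exp 1 := by
    have := Real.exp_one_gt_d9
    linarith
  have hD2 : (0 : ℝ) < (N : ℝ) * Real.exp 1 - 2 * (m : ℝ) := by nlinarith
  have hDpos : (0 : ℝ) < δ * Real.exp 1 - 2 := by
    nlinarith [mul_le_mul_of_nonneg_left he2 (by linarith : (0:ℝ) ≤ δ)]
  -- rewrite the constant
  have hc' : (δ - 2) / (δ * Real.exp 1 - 2)
      = ((N : ℝ) - 2 * (m : ℝ)) / ((N : ℝ) * Real.exp 1 - 2 * (m : ℝ)) := by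
    rw [div_eq_div_iff (ne_of_gt hDpos) (ne_of_gt hD2), hδ]
    field_simp
  -- OPT is nonnegative
  have hOPT0 : 0 ≤ OPT := by
    refine hOPT.2 ⟨fun _ => 0, fun i => Nat.zero_le 1, ?_, by simp⟩
    have : Br.sup (fun i => r i * 0) = 0 := by
      simp
    simp [this]
  -- membership data for OPT
  obtain ⟨x, hx1, hx2, hxw⟩ := hOPT.1
  -- total demand of OPT fits in N
  have hfeas : (∑ i ∈ Finset.Icc 1 n, (r i : ℝ) * (x i : ℝ)) ≤ (N : ℝ) := by
    have h1 : (∑ i ∈ Finset.Icc 1 n, r i * x i) ≤ N := le_trans (Nat.le_add_right _ _) hx2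
    calc (∑ i ∈ Finset.Icc 1 n, (r i : ℝ) * (x i : ℝ))
        = ((∑ i ∈ Finset.Icc 1 n, r i * x i : ℕ) : ℝ) := by push_cast; ring_nf
      _ ≤ (N : ℝ) := by exact_mod_cast h1
  -- goal reduction
  rw [ge_iff_le, hc', div_mul_eq_mul_div, div_le_iff₀ hD2]
  rcases eq_or_lt_of_le hTn with hTeq | hTlt
  · -- greedy accepted everything: OPT ≤ p
    have hOPTp : OPT ≤ p := by
      rw [hxw, hp, hTeq]
      refine Finset.sum_le_sum fun i hi => ?_
      have hvi := hv i hi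
      have hxi : ((x i : ℝ)) ≤ 1 := by exact_mod_cast hx1 i
      exact mul_le_of_le_one_right hvi.le hxi
    have hp0 : 0 ≤ p := le_trans hOPT0 hOPTp
    have h1 : ((N:ℝ) - 2*(m:ℝ)) * OPT ≤ ((N:ℝ) - 2*(m:ℝ)) * p :=
      mul_le_mul_of_nonneg_left hOPTp hNr2M.le
    have h2 : ((N:ℝ) - 2*(m:ℝ)) * p ≤ ((N:ℝ) * Real.exp 1 - 2*(m:ℝ)) * p :=
      mul_le_mul_of_nonneg_right (by nlinarith) hp0
    nlinarith [h1, h2]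
  · -- T < n : the dual variable overflowed
    -- closed form for lam
    have hlam : ∀ t, t ≤ n → lam t = (1 / (N : ℝ)) *
        Real.exp ((δ - 2) * (∑ s ∈ Finset.Icc 1 t, (r s : ℝ)) / ((N : ℝ) - 2 * (m : ℝ))) := by
      intro t
      induction t with
      | zero => intro _; simp [hlam0]
      | succ t ih =>
        intro ht
        rw [hlamrec t (by omega), ih (by omega),
          Finset.sum_Icc_succ_top (by omega : 1 ≤ t + 1), mul_assoc, ← Real.exp_add]
        congr 2
        ring
    set S : ℝ := ∑ s ∈ Finset.Icc 1 T, (r s : ℝ) with hSdef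
    have hS : (N : ℝ) - 2 * (m : ℝ) < S := by
      have h := hTmax hTlt
      rw [hlam T hTn] at h
      rw [← mul_assoc, mul_one_div, div_self (ne_of_gt hNr0), one_mul] at h
      have h2 := Real.exp_lt_exp.mp h
      rw [lt_div_iff₀ hNr2M] at h2
      have h3 : (δ - 2) * ((N : ℝ) - 2 * (m : ℝ)) < (δ - 2) * S := by linarith
      exact lt_of_mul_lt_mul_left h3 hδ2.le
    -- the marginal ratio
    set ρ : ℝ := v (T + 1) / (r (T + 1) : ℝ) with hρdef
    have hT1mem : T + 1 ∈ Finset.Icc 1 n := by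
      rw [Finset.mem_Icc]; omega
    have hrT1 : (0 : ℝ) < (r (T + 1) : ℝ) := by exact_mod_cast hr _ hT1mem
    have hρ0 : 0 ≤ ρ := le_of_lt (div_pos (hv _ hT1mem) hrT1)
    -- p ≥ ρ * S
    have hρS : ρ * S ≤ p := by
      rw [hp, hSdef, Finset.mul_sum]
      refine Finset.sum_le_sum fun t ht => ?_
      rw [Finset.mem_Icc] at ht
      have htmem : t ∈ Finset.Icc 1 n := by rw [Finset.mem_Icc]; omega
      have hrt : (0 : ℝ) < (r t : ℝ) := by exact_mod_cast hr _ htmem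
      have hratio : ρ ≤ v t / (r t : ℝ) := hsort t (T + 1) ht.1 (by omega) (by omega)
      have := mul_le_mul_of_nonneg_right hratio hrt.le
      rwa [div_mul_cancel₀ _ (ne_of_gt hrt)] at this
    have hp0 : 0 ≤ p := le_trans (mul_nonneg hρ0 (by linarith)) hρS
    have hρNm : ρ * ((N : ℝ) - 2 * (m : ℝ)) ≤ p :=
      le_trans (mul_le_mul_of_nonneg_left hS.le hρ0) hρS
    -- split OPT's objective at T
    have hIoc : ∀ k : ℕ, Finset.Ioc 0 k = Finset.Icc 1 k := by
      intro k; ext a; simp only [Finset.mem_Ioc, Finset.mem_Icc]; omega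
    have hsplit : (∑ i ∈ Finset.Ioc 0 T, v i * (x i : ℝ)) +
        (∑ i ∈ Finset.Ioc T n, v i * (x i : ℝ)) = ∑ i ∈ Finset.Icc 1 n, v i * (x i : ℝ) := by
      rw [← hIoc n]
      exact Finset.sum_Ioc_consecutive _ (Nat.zero_le T) hTn
    have hpart1 : (∑ i ∈ Finset.Ioc 0 T, v i * (x i : ℝ)) ≤ p := by
      rw [hp, ← hIoc T]
      refine Finset.sum_le_sum fun i hi => ?_
      rw [Finset.mem_Ioc] at hi
      have hvi := hv i (by rw [Finset.mem_Icc]; omega)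
      have hxi : ((x i : ℝ)) ≤ 1 := by exact_mod_cast hx1 i
      exact mul_le_of_le_one_right hvi.le hxi
    have hpart2 : (∑ i ∈ Finset.Ioc T n, v i * (x i : ℝ)) ≤ ρ * (N : ℝ) := by
      have step1 : (∑ i ∈ Finset.Ioc T n, v i * (x i : ℝ)) ≤
          ∑ i ∈ Finset.Ioc T n, ρ * ((r i : ℝ) * (x i : ℝ)) := by
        refine Finset.sum_le_sum fun i hi => ?_
        rw [Finset.mem_Ioc] at hi
        have himem : i ∈ Finset.Icc 1 n := by rw [Finset.mem_Icc]; omega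
        have hri : (0 : ℝ) < (r i : ℝ) := by exact_mod_cast hr _ himem
        have hratio : v i / (r i : ℝ) ≤ ρ := hsort (T + 1) i (by omega) (by omega) hi.2
        have hxi0 : (0 : ℝ) ≤ (r i : ℝ) * (x i : ℝ) :=
          mul_nonneg hri.le (Nat.cast_nonneg _)
        have h := mul_le_mul_of_nonneg_right hratio hxi0
        rwa [← mul_assoc, div_mul_cancel₀ _ (ne_of_gt hri)] at h
      have step2 : (∑ i ∈ Finset.Ioc T n, (r i : ℝ) * (x i : ℝ)) ≤ (N : ℝ) := by
        refine le_trans ?_ hfeas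
        refine Finset.sum_le_sum_of_subset_of_nonneg ?_ fun i _ _ =>
          mul_nonneg (Nat.cast_nonneg _) (Nat.cast_nonneg _)
        intro i hi
        rw [Finset.mem_Ioc] at hi
        rw [Finset.mem_Icc]
        omega
      calc (∑ i ∈ Finset.Ioc T n, v i * (x i : ℝ))
          ≤ ∑ i ∈ Finset.Ioc T n, ρ * ((r i : ℝ) * (x i : ℝ)) := step1
        _ = ρ * ∑ i ∈ Finset.Ioc T n, (r i : ℝ) * (x i : ℝ) := by rw [Finset.mul_sum]
        _ ≤ ρ * (N : ℝ) := mul_le_mul_of_nonneg_left step2 hρ0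
    have hOPTub : OPT ≤ p + ρ * (N : ℝ) := by
      rw [hxw, ← hsplit]
      exact add_le_add hpart1 hpart2
    -- combine
    have hA : OPT * ((N : ℝ) - 2 * (m : ℝ)) ≤ p * (2 * (N : ℝ) - 2 * (m : ℝ)) := by
      nlinarith [mul_le_mul_of_nonneg_right hOPTub hNr2M.le,
        mul_le_mul_of_nonneg_left hρNm hNr0.le]
    have hB : p * (2 * (N : ℝ) - 2 * (m : ℝ)) ≤ p * ((N : ℝ) * Real.exp 1 - 2 * (m : ℝ)) :=
      mul_le_mul_of_nonneg_left (by nlinarith) hp0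
    rw [mul_comm]
    linarith [hA, hB]
end

section
/- Let bidders 1, …, n, partitioned into relay nodes B_r and user equipments B_u, have integer demands r_i with 1 ≤ r_i ≤ m := max_i r_i, and let N be an integer with N > 2m and δ = N/m. Define λ_0 = 1/N and λ_t = λ_{t−1}·exp((δ−2)·r_t/(N−2m)), and let T be the largest index such that N·λ_{t−1} ≤ exp(δ−2) for all 1 ≤ t ≤ T. Then the accepted set {1, …, T} is feasible: Σ_{t=1}^{T} r_t + max_{1 ≤ t ≤ T, t ∈ B_r} r_t ≤ N (the maximum over the empty set being 0). -/
/-- Theorem 3 of the paper — the set of bids accepted by the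
greedy algorithm is primal feasible: total accepted demand plus the maximum
accepted relay demand fits within the `N` resource blocks. -/
theorem stmt16 (n : ℕ) (hn : 1 ≤ n)
    (Br Bu : Finset ℕ) (hpart : Br ∪ Bu = Finset.Icc 1 n) (hdisj : Disjoint Br Bu)
    (r : ℕ → ℕ) (hr : ∀ i ∈ Finset.Icc 1 n, 1 ≤ r i)
    (m : ℕ) (hm : m = (Finset.Icc 1 n).sup r)
    (N : ℕ) (hN : 2 * m < N)
    (δ : ℝ) (hδ : δ = (N : ℝ) / (m : ℝ))
    (lam : ℕ → ℝ) (hlam0 : lam 0 = 1 / (N : ℝ))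
    (hlamrec : ∀ t : ℕ, t < n →
      lam (t + 1) = lam t * Real.exp ((δ - 2) * (r (t + 1) : ℝ) / ((N : ℝ) - 2 * (m : ℝ))))
    (T : ℕ) (hTn : T ≤ n)
    (hTle : ∀ t : ℕ, 1 ≤ t → t ≤ T → (N : ℝ) * lam (t - 1) ≤ Real.exp (δ - 2))
    (hTmax : T < n → Real.exp (δ - 2) < (N : ℝ) * lam T) :
    (∑ t ∈ Finset.Icc 1 T, r t) + ((Finset.Icc 1 T) ∩ Br).sup r ≤ N := by
  -- basic facts
  have hm1 : 1 ≤ m := by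
    have h1 : (1 : ℕ) ∈ Finset.Icc 1 n := by simp [hn]
    have := hr 1 h1
    calc 1 ≤ r 1 := this
    _ ≤ (Finset.Icc 1 n).sup r := Finset.le_sup h1
    _ = m := hm.symm
  have hNpos : 0 < N := by omega
  have hNR : (0:ℝ) < N := by exact_mod_cast hNpos
  have hmR : (0:ℝ) < m := by exact_mod_cast hm1
  have h2m : (2*(m:ℝ)) < N := by exact_mod_cast hN
  have hden : (0:ℝ) < (N:ℝ) - 2 * m := by linarith
  have hδ2 : 0 < δ - 2 := by
    have : (2:ℝ) < (N:ℝ)/m := by rw [lt_div_iff₀ hmR]; linarith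
    rw [hδ]; linarith
  -- sup over intersection ≤ m
  have hsup : ((Finset.Icc 1 T) ∩ Br).sup r ≤ m := by
    rw [hm]
    apply Finset.sup_mono
    intro x hx
    simp only [Finset.mem_inter, Finset.mem_Icc] at hx
    exact Finset.mem_Icc.mpr ⟨hx.1.1, hx.1.2.trans hTn⟩
  -- r i ≤ m for i ∈ Icc 1 n
  have hrle : ∀ i ∈ Finset.Icc 1 n, r i ≤ m := fun i hi => hm ▸ Finset.le_sup hi
  -- closed form for lam
  have hclosed : ∀ t, t ≤ n →
      lam t = (1/(N:ℝ)) * Real.exp ((δ - 2) * (∑ i ∈ Finset.Icc 1 t, (r i : ℝ)) / ((N:ℝ) - 2*m)) := by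
    intro t
    induction t with
    | zero => intro _; simp [hlam0]
    | succ k ih =>
      intro hk
      have hkn : k < n := hk
      rw [hlamrec k hkn, ih (le_of_lt hkn)]
      rw [Finset.sum_Icc_succ_top (by omega : 1 ≤ k + 1)]
      rw [mul_assoc, ← Real.exp_add]
      ring_nf
  rcases Nat.eq_zero_or_pos T with hT0 | hT1
  · subst hT0; simp
  -- main case: T ≥ 1
  have hTmem : T ∈ Finset.Icc 1 n := Finset.mem_Icc.mpr ⟨hT1, hTn⟩
  have hkey := hTle T hT1 le_rfl
  have hT1n : T - 1 ≤ n := by omega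
  rw [hclosed (T-1) hT1n] at hkey
  -- N * (1/N) * exp(...) ≤ exp (δ-2)
  have hNe : (N:ℝ) ≠ 0 := ne_of_gt hNR
  rw [← mul_assoc, mul_one_div, div_self hNe, one_mul] at hkey
  have hexp := Real.exp_le_exp.mp hkey
  have hsum1 : (∑ i ∈ Finset.Icc 1 (T-1), (r i : ℝ)) ≤ (N:ℝ) - 2*m := by
    rw [div_le_iff₀ hden] at hexp
    nlinarith [hexp]
  -- natural number version
  have hsum1n : (∑ i ∈ Finset.Icc 1 (T-1), r i) ≤ N - 2*m := by
    have : ((∑ i ∈ Finset.Icc 1 (T-1), r i : ℕ) : ℝ) ≤ ((N - 2*m : ℕ) : ℝ) := by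
      push_cast [Nat.cast_sub (le_of_lt hN)]
      linarith [hsum1]
    exact_mod_cast this
  -- split sum at T
  have hsplit : (∑ i ∈ Finset.Icc 1 T, r i) = (∑ i ∈ Finset.Icc 1 (T-1), r i) + r T := by
    have : T = (T - 1) + 1 := by omega
    rw [this, Finset.sum_Icc_succ_top (by omega : 1 ≤ T - 1 + 1)]
    congr 1 <;> omega
  have hrT : r T ≤ m := hrle T hTmem
  omega
end
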